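/- For every λ ∈ ℚ with λ ≠ 0 and all words u, v ∈ L*: Δ̄_λ(u ⧢_λ v) − Δ̄_λ(u) ⧢_λ Δ̄_λ(v) ∈ T_- ⊗ ℚ⟨L⟩ + ℚ⟨L⟩ ⊗ T_-. (Consequently the quotient H_λ = ℚ⟨L⟩/T_- with the induced product ⧢_λ and coproduct Δ_λ is a bialgebra, and being graded and connected, a Hopf algebra.) -/

import Mathlib

open scoped TensorProduct

/-- The two-letter alphabet `L = {d, y}`. -/
inductive Letter : Type
  | d : Letter
  | y : Letter
deriving DecidableEq

/-- `ℚ⟨L⟩`, the ℚ-vector space with basis the words on `L` (with the concatenation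
product, it is the free noncommutative ℚ-algebra on `L`). -/
abbrev V : Type := MonoidAlgebra ℚ (FreeMonoid Letter)

/-- The basis vector corresponding to a word. -/
noncomputable def wrd (w : List Letter) : V :=
  MonoidAlgebra.single (FreeMonoid.ofList w) (1 : ℚ)

/-- The shuffle-type product `⧢_λ` on basis words, defined recursively by
(P1) `e ⧢ w = w ⧢ e = w`; (P2) `(yu) ⧢ v = u ⧢ (yv) = y(u ⧢ v)`;
(P3) `(du) ⧢ (dv) = (1/λ)(d(u ⧢ v) − (du) ⧢ v − u ⧢ (dv))`. -/
noncomputable def shW (lam : ℚ) : List Letter → List Letter → V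
  | [], v => wrd v
  | u@(_ :: _), [] => wrd u
  | (Letter.y :: u), v => wrd [Letter.y] * shW lam u v
  | (Letter.d :: u), (Letter.y :: v) => wrd [Letter.y] * shW lam (Letter.d :: u) v
  | (Letter.d :: u), (Letter.d :: v) =>
      lam⁻¹ • (wrd [Letter.d] * shW lam u v
        - shW lam (Letter.d :: u) v - shW lam u (Letter.d :: v))
termination_by u v => u.length + v.length

/-- The ℚ-bilinear extension of `⧢_λ` to `ℚ⟨L⟩`. -/
noncomputable def shL (lam : ℚ) : V →ₗ[ℚ] V →ₗ[ℚ] V :=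
  (Finsupp.lsum ℚ fun u => LinearMap.toSpanSingleton ℚ (V →ₗ[ℚ] V)
    ((Finsupp.lsum ℚ fun v =>
      LinearMap.toSpanSingleton ℚ V (shW lam (FreeMonoid.toList u) (FreeMonoid.toList v)))
      ∘ₗ (MonoidAlgebra.coeffLinearEquiv ℚ).toLinearMap))
    ∘ₗ (MonoidAlgebra.coeffLinearEquiv ℚ).toLinearMap

/-- The values of `Δ̄_λ` on letters: `Δ̄_λ(y) = e⊗y + y⊗e`,
`Δ̄_λ(d) = e⊗d + d⊗e + λ·(d⊗d)`. -/
noncomputable def dval (lam : ℚ) : Letter → (V ⊗[ℚ] V)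
  | Letter.y => 1 ⊗ₜ wrd [Letter.y] + wrd [Letter.y] ⊗ₜ 1
  | Letter.d => 1 ⊗ₜ wrd [Letter.d] + wrd [Letter.d] ⊗ₜ 1
      + lam • (wrd [Letter.d] ⊗ₜ wrd [Letter.d])

/-- `Δ̄_λ : ℚ⟨L⟩ → ℚ⟨L⟩ ⊗ ℚ⟨L⟩`, the unique morphism of unital ℚ-algebras
(concatenation product on the source, componentwise concatenation on the tensor square)
with the prescribed values on the letters. -/
noncomputable def Delta (lam : ℚ) : V →ₐ[ℚ] (V ⊗[ℚ] V) :=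
  MonoidAlgebra.lift ℚ (V ⊗[ℚ] V) (FreeMonoid Letter) (FreeMonoid.lift (dval lam))

/-- The componentwise extension of `⧢_λ` to `ℚ⟨L⟩ ⊗ ℚ⟨L⟩`:
`(a⊗b) ⧢ (c⊗d) = (a ⧢ c) ⊗ (b ⧢ d)`. -/
noncomputable def shT (lam : ℚ) (x z : V ⊗[ℚ] V) : V ⊗[ℚ] V :=
  (TensorProduct.map (TensorProduct.lift (shL lam)) (TensorProduct.lift (shL lam)))
    ((TensorProduct.tensorTensorTensorComm ℚ V V V V) (x ⊗ₜ z))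

/-- `T₋ ⊆ ℚ⟨L⟩`: the span of the words ending in the letter `d`. -/
noncomputable def Tneg : Submodule ℚ V :=
  Submodule.span ℚ {x : V | ∃ w : List Letter, x = wrd (w ++ [Letter.d])}

open Letter

/- ### Basic lemmas about `wrd` -/

lemma wrd_nil : wrd [] = 1 := rfl

lemma wrd_cons (l : Letter) (u : List Letter) : wrd (l :: u) = wrd [l] * wrd u := by
  simp only [wrd, MonoidAlgebra.single_mul_single, one_mul]
  rfl

lemma wrd_of (g : FreeMonoid Letter) :
    MonoidAlgebra.of ℚ (FreeMonoid Letter) g = wrd (FreeMonoid.toList g) := by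
  simp [wrd, MonoidAlgebra.of_apply]

/- ### `shL` on basis vectors -/

lemma shL_wrd (lam : ℚ) (u v : List Letter) : shL lam (wrd u) (wrd v) = shW lam u v := by
  rw [shL]
  simp only [wrd, LinearMap.coe_comp, Function.comp_apply, LinearEquiv.coe_coe,
    MonoidAlgebra.coeffLinearEquiv_apply, MonoidAlgebra.coeff_single, Finsupp.lsum_single,
    LinearMap.toSpanSingleton_apply, one_smul, FreeMonoid.toList_ofList]

/- ### Recursion equations for `shW` -/

lemma shW_nil_left (lam : ℚ) (v : List Letter) : shW lam [] v = wrd v := by rw [shW]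

lemma shW_nil_right (lam : ℚ) (u : List Letter) : shW lam u [] = wrd u := by
  cases u <;> rw [shW]

lemma shW_y_left (lam : ℚ) (u v : List Letter) :
    shW lam (y :: u) v = wrd [y] * shW lam u v := by
  cases v with
  | nil => rw [shW_nil_right, shW_nil_right, ← wrd_cons]
  | cons a w =>
    rw [shW]
    simp

lemma shW_dy (lam : ℚ) (u v : List Letter) :
    shW lam (d :: u) (y :: v) = wrd [y] * shW lam (d :: u) v := by rw [shW]

lemma shW_y_right (lam : ℚ) (u v : List Letter) :
    shW lam u (y :: v) = wrd [y] * shW lam u v := by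
  induction u generalizing v with
  | nil => rw [shW_nil_left, shW_nil_left, ← wrd_cons]
  | cons a w ih =>
    cases a with
    | d => rw [shW_dy]
    | y => rw [shW_y_left, shW_y_left, ih]

lemma shW_dd (lam : ℚ) (u v : List Letter) :
    shW lam (d :: u) (d :: v) = lam⁻¹ • (wrd [d] * shW lam u v
        - shW lam (d :: u) v - shW lam u (d :: v)) := by rw [shW]

lemma shW_d_mul (lam : ℚ) (hlam : lam ≠ 0) (u v : List Letter) :
    wrd [d] * shW lam u v = lam • shW lam (d :: u) (d :: v)
      + shW lam (d :: u) v + shW lam u (d :: v) := by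
  rw [shW_dd, smul_smul, mul_inv_cancel₀ hlam, one_smul]
  abel

/- ### Bilinearity lemmas for `shL` -/

lemma shL_add_left (lam : ℚ) (x x' z : V) :
    shL lam (x + x') z = shL lam x z + shL lam x' z := by
  rw [map_add, LinearMap.add_apply]

lemma shL_smul_left (lam : ℚ) (c : ℚ) (x z : V) :
    shL lam (c • x) z = c • shL lam x z := by
  rw [map_smul, LinearMap.smul_apply]

lemma shL_add_right (lam : ℚ) (x z z' : V) :
    shL lam x (z + z') = shL lam x z + shL lam x z' := map_add _ _ _

lemma shL_smul_right (lam : ℚ) (c : ℚ) (x z : V) :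
    shL lam x (c • z) = c • shL lam x z := map_smul _ _ _

/- ### The `⧢`-identities, extended bilinearly -/

lemma shL_one_left (lam : ℚ) (x : V) : shL lam 1 x = x := by
  induction x using MonoidAlgebra.induction_on with
  | of g => rw [wrd_of, ← wrd_nil, shL_wrd, shW_nil_left]
  | add f g hf hg => rw [shL_add_right, hf, hg]
  | smul r f hf => rw [shL_smul_right, hf]

lemma shL_one_right (lam : ℚ) (x : V) : shL lam x 1 = x := by
  induction x using MonoidAlgebra.induction_on with
  | of g => rw [wrd_of, ← wrd_nil, shL_wrd, shW_nil_right]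
  | add f g hf hg => rw [shL_add_left, hf, hg]
  | smul r f hf => rw [shL_smul_left, hf]

lemma shL_wrd_y_left (lam : ℚ) (u : List Letter) (z : V) :
    shL lam (wrd (y :: u)) z = wrd [y] * shL lam (wrd u) z := by
  induction z using MonoidAlgebra.induction_on with
  | of g => rw [wrd_of, shL_wrd, shL_wrd, shW_y_left]
  | add f g hf hg => rw [shL_add_right, shL_add_right, hf, hg, mul_add]
  | smul r f hf => rw [shL_smul_right, shL_smul_right, hf, mul_smul_comm]

lemma shL_y_left (lam : ℚ) (x z : V) :
    shL lam (wrd [y] * x) z = wrd [y] * shL lam x z := by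
  induction x using MonoidAlgebra.induction_on with
  | of g => rw [wrd_of, ← wrd_cons, shL_wrd_y_left]
  | add f g hf hg => rw [mul_add, shL_add_left, shL_add_left, hf, hg, mul_add]
  | smul r f hf => rw [mul_smul_comm, shL_smul_left, shL_smul_left, hf, mul_smul_comm]

lemma shL_wrd_y_right (lam : ℚ) (v : List Letter) (x : V) :
    shL lam x (wrd (y :: v)) = wrd [y] * shL lam x (wrd v) := by
  induction x using MonoidAlgebra.induction_on with
  | of g => rw [wrd_of, shL_wrd, shL_wrd, shW_y_right]
  | add f g hf hg => rw [shL_add_left, shL_add_left, hf, hg, mul_add]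
  | smul r f hf => rw [shL_smul_left, shL_smul_left, hf, mul_smul_comm]

lemma shL_y_right (lam : ℚ) (x z : V) :
    shL lam x (wrd [y] * z) = wrd [y] * shL lam x z := by
  induction z using MonoidAlgebra.induction_on with
  | of g => rw [wrd_of, ← wrd_cons, shL_wrd_y_right]
  | add f g hf hg => rw [mul_add, shL_add_right, shL_add_right, hf, hg, mul_add]
  | smul r f hf => rw [mul_smul_comm, shL_smul_right, shL_smul_right, hf, mul_smul_comm]

lemma shL_wrd_d_mul (lam : ℚ) (hlam : lam ≠ 0) (u : List Letter) (z : V) :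
    wrd [d] * shL lam (wrd u) z =
      lam • shL lam (wrd (d :: u)) (wrd [d] * z) + shL lam (wrd (d :: u)) z
        + shL lam (wrd u) (wrd [d] * z) := by
  induction z using MonoidAlgebra.induction_on with
  | of g => rw [wrd_of, ← wrd_cons, shL_wrd, shL_wrd, shL_wrd, shL_wrd, shW_d_mul lam hlam]
  | add f g hf hg =>
      simp only [mul_add, shL_add_right, hf, hg, smul_add]
      abel
  | smul r f hf =>
      simp only [mul_smul_comm, shL_smul_right, hf, smul_add, smul_comm lam r]

lemma shL_d_mul (lam : ℚ) (hlam : lam ≠ 0) (x z : V) :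
    wrd [d] * shL lam x z =
      lam • shL lam (wrd [d] * x) (wrd [d] * z) + shL lam (wrd [d] * x) z
        + shL lam x (wrd [d] * z) := by
  induction x using MonoidAlgebra.induction_on with
  | of g => rw [wrd_of, ← wrd_cons, shL_wrd_d_mul lam hlam]
  | add f g hf hg =>
      simp only [mul_add, shL_add_left, shL_add_right, hf, hg, smul_add]
      abel
  | smul r f hf =>
      simp only [mul_smul_comm, shL_smul_left, shL_smul_right, hf, smul_add, smul_comm lam r]

set_option synthInstance.maxHeartbeats 1000000
set_option maxHeartbeats 1000000

/- ### `shT` basics -/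

lemma shT_tmul (lam : ℚ) (a b c e : V) :
    shT lam (a ⊗ₜ b) (c ⊗ₜ e) = shL lam a c ⊗ₜ[ℚ] shL lam b e := by
  simp [shT, TensorProduct.tensorTensorTensorComm_tmul]

lemma shT_add_left (lam : ℚ) (s s' t : V ⊗[ℚ] V) :
    shT lam (s + s') t = shT lam s t + shT lam s' t := by
  simp [shT, TensorProduct.add_tmul]

lemma shT_add_right (lam : ℚ) (s t t' : V ⊗[ℚ] V) :
    shT lam s (t + t') = shT lam s t + shT lam s t' := by
  simp [shT, TensorProduct.tmul_add]

lemma shT_smul_left (lam : ℚ) (c : ℚ) (s t : V ⊗[ℚ] V) :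
    shT lam (c • s) t = c • shT lam s t := by
  rw [shT, shT, ← TensorProduct.smul_tmul', LinearEquiv.map_smul, LinearMap.map_smul]

lemma shT_smul_right (lam : ℚ) (c : ℚ) (s t : V ⊗[ℚ] V) :
    shT lam s (c • t) = c • shT lam s t := by
  simp [shT, TensorProduct.tmul_smul]

lemma shT_zero_left (lam : ℚ) (t : V ⊗[ℚ] V) : shT lam 0 t = 0 := by
  simp [shT, TensorProduct.zero_tmul]

lemma shT_zero_right (lam : ℚ) (s : V ⊗[ℚ] V) : shT lam s 0 = 0 := by
  simp [shT, TensorProduct.tmul_zero]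

lemma shT_one_left (lam : ℚ) (t : V ⊗[ℚ] V) : shT lam 1 t = t := by
  induction t with
  | zero => exact shT_zero_right lam 1
  | tmul a b => rw [Algebra.TensorProduct.one_def, shT_tmul, shL_one_left, shL_one_left]
  | add f g hf hg => rw [shT_add_right, hf, hg]

lemma shT_one_right (lam : ℚ) (s : V ⊗[ℚ] V) : shT lam s 1 = s := by
  induction s with
  | zero => exact shT_zero_left lam 1
  | tmul a b => rw [Algebra.TensorProduct.one_def, shT_tmul, shL_one_right, shL_one_right]
  | add f g hf hg => rw [shT_add_left, hf, hg]

/- ### `Delta` basics -/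

lemma Delta_letter (lam : ℚ) (l : Letter) : Delta lam (wrd [l]) = dval lam l := by
  have h : wrd [l] = MonoidAlgebra.single (FreeMonoid.of l) (1:ℚ) := rfl
  rw [Delta, h, MonoidAlgebra.lift_single, FreeMonoid.lift_eval_of, one_smul]

/- ### Tensor-level identities -/

lemma shT_y_left (lam : ℚ) (s t : V ⊗[ℚ] V) :
    shT lam (dval lam y * s) t = dval lam y * shT lam s t := by
  induction s with
  | zero => rw [mul_zero, shT_zero_left, mul_zero]
  | add f g hf hg => rw [mul_add, shT_add_left, hf, hg, shT_add_left, mul_add]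
  | tmul a b =>
    induction t with
    | zero => rw [shT_zero_right, shT_zero_right, mul_zero]
    | add f g hf hg => rw [shT_add_right, hf, hg, shT_add_right, mul_add]
    | tmul c e =>
      simp only [dval, add_mul, Algebra.TensorProduct.tmul_mul_tmul, one_mul, mul_one,
        shT_add_left, shT_tmul, shL_y_left, mul_add]

lemma shT_y_right (lam : ℚ) (s t : V ⊗[ℚ] V) :
    shT lam s (dval lam y * t) = dval lam y * shT lam s t := by
  induction t with
  | zero => rw [mul_zero, shT_zero_right, mul_zero]
  | add f g hf hg => rw [mul_add, shT_add_right, hf, hg, shT_add_right, mul_add]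
  | tmul c e =>
    induction s with
    | zero => rw [shT_zero_left, shT_zero_left, mul_zero]
    | add f g hf hg => rw [shT_add_left, hf, hg, shT_add_left, mul_add]
    | tmul a b =>
      simp only [dval, add_mul, Algebra.TensorProduct.tmul_mul_tmul, one_mul, mul_one,
        shT_add_right, shT_tmul, shL_y_right, mul_add]

lemma shT_d_mul (lam : ℚ) (hlam : lam ≠ 0) (s t : V ⊗[ℚ] V) :
    dval lam d * shT lam s t =
      lam • shT lam (dval lam d * s) (dval lam d * t) + shT lam (dval lam d * s) t
        + shT lam s (dval lam d * t) := by
  induction s with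
  | zero => simp only [shT_zero_left, mul_zero, shT_zero_left, smul_zero, add_zero, zero_add]
  | add f g hf hg =>
    simp only [mul_add, shT_add_left, hf, hg, smul_add]
    abel
  | tmul a b =>
    induction t with
    | zero => simp only [shT_zero_right, mul_zero, shT_zero_right, smul_zero, add_zero, zero_add]
    | add f g hf hg =>
      simp only [mul_add, shT_add_right, hf, hg, smul_add]
      abel
    | tmul c e =>
      simp only [dval, add_mul, mul_add, Algebra.TensorProduct.tmul_mul_tmul, one_mul, mul_one,
        smul_mul_assoc, mul_smul_comm, shT_add_left, shT_add_right, shT_smul_left,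
        shT_smul_right, shT_tmul, shL_smul_left, shL_smul_right,
        shL_d_mul lam hlam a, shL_d_mul lam hlam b,
        TensorProduct.tmul_add, TensorProduct.add_tmul, TensorProduct.tmul_smul,
        TensorProduct.smul_tmul', smul_add, smul_smul]
      module

/- ### `Delta` on words -/

lemma Delta_cons (lam : ℚ) (l : Letter) (u : List Letter) :
    Delta lam (wrd (l :: u)) = dval lam l * Delta lam (wrd u) := by
  rw [wrd_cons, map_mul, Delta_letter]

/- ### Main multiplicativity lemma: `Δ̄` intertwines `⧢` exactly -/

lemma key (lam : ℚ) (hlam : lam ≠ 0) :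
    ∀ n u v, u.length + v.length ≤ n →
      Delta lam (shW lam u v) = shT lam (Delta lam (wrd u)) (Delta lam (wrd v)) := by
  intro n
  induction n with
  | zero =>
    intro u v h
    cases u with
    | cons l u => simp at h
    | nil =>
      cases v with
      | cons m v => simp at h
      | nil => rw [shW_nil_left, wrd_nil, map_one, shT_one_left]
  | succ n ih =>
    intro u v h
    cases u with
    | nil => rw [shW_nil_left, wrd_nil, map_one, shT_one_left]
    | cons l u =>
      cases v with
      | nil => rw [shW_nil_right, wrd_nil, map_one, shT_one_right]
      | cons m v =>
        simp only [List.length_cons] at h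
        cases l with
        | y =>
          rw [shW_y_left, map_mul, Delta_letter,
            ih u (m :: v) (by simp only [List.length_cons]; omega),
            Delta_cons lam y u, shT_y_left]
        | d =>
          cases m with
          | y =>
            rw [shW_dy, map_mul, Delta_letter,
              ih (d :: u) v (by simp only [List.length_cons]; omega),
              Delta_cons lam y v, shT_y_right]
          | d =>
            rw [shW_dd, map_smul, map_sub, map_sub, map_mul, Delta_letter,
              ih u v (by omega),
              ih (d :: u) v (by simp only [List.length_cons]; omega),
              ih u (d :: v) (by simp only [List.length_cons]; omega),
              Delta_cons lam d u, Delta_cons lam d v,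
              shT_d_mul lam hlam]
            have h2 : ∀ X A B : V ⊗[ℚ] V, lam • X + A + B - A - B = lam • X := by
              intro X A B; abel
            rw [h2, inv_smul_smul₀ hlam]

/-- For `λ ≠ 0` and words `u, v`:
`Δ̄_λ(u ⧢_λ v) − Δ̄_λ(u) ⧢_λ Δ̄_λ(v) ∈ T₋ ⊗ ℚ⟨L⟩ + ℚ⟨L⟩ ⊗ T₋`. -/
theorem stmt_12 (lam : ℚ) (hlam : lam ≠ 0) (u v : List Letter) :
    Delta lam (shL lam (wrd u) (wrd v)) -
        shT lam (Delta lam (wrd u)) (Delta lam (wrd v)) ∈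
      LinearMap.range (TensorProduct.map Tneg.subtype (LinearMap.id : V →ₗ[ℚ] V)) ⊔
        LinearMap.range (TensorProduct.map (LinearMap.id : V →ₗ[ℚ] V) Tneg.subtype) := by
  rw [shL_wrd, key lam hlam (u.length + v.length) u v le_rfl, sub_self]
  exact zero_mem _
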